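/- Let the setup be as described and fix p₀ ∈ P. Then the functional L is bounded from below on the set C̃₁ := { u : cl(P) → ℝ convex | ∫_{∂P} α u dσ = 1 and inf_P u = u(p₀) = 0 }; that is, there exists a real constant B such that L(u) ≥ B for every u ∈ C̃₁. -/

import Mathlib

open MeasureTheory Set Metric Bornology
open scoped ENNReal
set_option maxHeartbeats 1000000


/-- Indicator of a function continuous on a measurable closed-ish set is measurable. -/
lemma aux_meas_indicator {X : Type*} [MeasurableSpace X] [TopologicalSpace X]
    [OpensMeasurableSpace X] {s : Set X} (hs : MeasurableSet s) {f : X → ℝ≥0∞}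
    (hf : ContinuousOn f s) : Measurable (s.indicator f) := by
  have h1 : Measurable (fun a : s => f a) := (ContinuousOn.restrict hf).measurable
  have he : MeasurableEmbedding ((↑) : s → X) := MeasurableEmbedding.subtype_coe hs
  have h2 := he.measurable_extend h1 (measurable_const : Measurable (fun _ : X => (0 : ℝ≥0∞)))
  convert h2 using 1
  funext x
  by_cases hx : x ∈ s
  · rw [Set.indicator_of_mem hx]
    have : x = ((⟨x, hx⟩ : s) : X) := rfl
    rw [this, Subtype.val_injective.extend_apply]
  · rw [Set.indicator_of_notMem hx, Function.extend_apply']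
    rintro ⟨a, rfl⟩
    exact hx a.2


lemma aux_norm2 (y : EuclideanSpace ℝ (Fin 2)) : ‖y‖ ^ 2 = y 0 ^ 2 + y 1 ^ 2 := by
  rw [EuclideanSpace.norm_eq, Real.sq_sqrt (by positivity), Fin.sum_univ_two]
  simp [Real.norm_eq_abs, sq_abs]

/-- Volume of the cone over a set `F` with apex `p₀` is controlled by the diameter of `F`. -/
lemma aux_arith (d L b c c' : ℝ) (hd0 : 0 ≤ d) (hL0 : 0 ≤ L) (hb : 0 ≤ b) (hb1 : b ≤ 1)
    (hc1 : -d ≤ c) (hc2 : c ≤ d) (hc1' : -d ≤ c') (hc2' : c' ≤ d) :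
    (-d ≤ b * (L + c) ∧ b * (L + c) ≤ L + d) ∧ (-d ≤ b * c' ∧ b * c' ≤ d) := by
  refine ⟨⟨?_, ?_⟩, ?_, ?_⟩ <;> nlinarith

lemma aux_cone (p₀ : EuclideanSpace ℝ (Fin 2)) (K : Set (EuclideanSpace ℝ (Fin 2)))
    (hK : Bornology.IsBounded K) (hp₀ : p₀ ∈ K) (F : Set (EuclideanSpace ℝ (Fin 2)))
    (hF : F ⊆ K) :
    volume (⋃ z ∈ F, segment ℝ p₀ z)
      ≤ ENNReal.ofReal (6 * Metric.diam K) * EMetric.diam F := by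
  rcases F.eq_empty_or_nonempty with rfl | ⟨x₀, hx₀⟩
  · simp
  set D := Metric.diam K with hD
  set δ := Metric.diam F with hδ
  have hFb : IsBounded F := hK.subset hF
  have hδ0 : 0 ≤ δ := Metric.diam_nonneg
  have hδD : δ ≤ D := Metric.diam_mono hF hK
  have hD0 : 0 ≤ D := Metric.diam_nonneg
  set q : EuclideanSpace ℝ (Fin 2) := x₀ - p₀ with hq
  set L := ‖q‖ with hL
  have hLD : L ≤ D := by
    rw [hL, hq, ← dist_eq_norm]; exact Metric.dist_le_diam_of_mem hK (hF hx₀) hp₀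
  have hL0 : 0 ≤ L := norm_nonneg q
  obtain ⟨v0, v1, hunit, hq0, hq1⟩ :
      ∃ v0 v1 : ℝ, v0 ^ 2 + v1 ^ 2 = 1 ∧ q 0 = L * v0 ∧ q 1 = L * v1 := by
    rcases eq_or_ne q 0 with h0 | h0
    · refine ⟨1, 0, by norm_num, ?_, ?_⟩ <;> simp [h0, hL]
    · have hLpos : 0 < L := norm_pos_iff.2 h0
      refine ⟨q 0 / L, q 1 / L, ?_, by field_simp, by field_simp⟩
      have h2 := aux_norm2 q
      field_simp
      linarith
  -- the rotation sending `q/L` to `e₀`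
  let T : EuclideanSpace ℝ (Fin 2) →ₗ[ℝ] EuclideanSpace ℝ (Fin 2) :=
  { toFun := fun y => (WithLp.equiv 2 (Fin 2 → ℝ)).symm ![v0 * y 0 + v1 * y 1,
      -v1 * y 0 + v0 * y 1]
    map_add' := by
      intro a b
      ext i
      fin_cases i <;>
        simp [WithLp.equiv_symm_apply] <;> ring
    map_smul' := by
      intro c a
      ext i
      fin_cases i <;>
        simp [WithLp.equiv_symm_apply] <;> ring }
  have hT0 : ∀ y : EuclideanSpace ℝ (Fin 2), T y 0 = v0 * y 0 + v1 * y 1 := by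
    intro y; simp [T, WithLp.equiv_symm_apply]
  have hT1 : ∀ y : EuclideanSpace ℝ (Fin 2), T y 1 = -v1 * y 0 + v0 * y 1 := by
    intro y; simp [T, WithLp.equiv_symm_apply]
  have hTnorm : ∀ y : EuclideanSpace ℝ (Fin 2), ‖T y‖ = ‖y‖ := by
    intro y
    have h1 := aux_norm2 (T y)
    have h2 := aux_norm2 y
    have h3 : ‖T y‖ ^ 2 = ‖y‖ ^ 2 := by
      rw [h1, h2, hT0, hT1]
      ring_nf
      linear_combination (y 0 ^ 2 + y 1 ^ 2) * hunit
    nlinarith [norm_nonneg (T y), norm_nonneg y]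
  let LI : EuclideanSpace ℝ (Fin 2) →ₗᵢ[ℝ] EuclideanSpace ℝ (Fin 2) := ⟨T, hTnorm⟩
  let G := LI.toLinearIsometryEquiv rfl
  have hGeq : ∀ y, G y = T y := by
    intro y
    rw [LinearIsometry.toLinearIsometryEquiv_apply]
    rfl
  have hGmp : MeasurePreserving G := G.measurePreserving
  set Ic : Set (Fin 2 → ℝ) := Set.univ.pi ![Icc (-δ) (L + δ), Icc (-δ) δ] with hIc
  have hIcmeas : MeasurableSet Ic := by
    apply MeasurableSet.univ_pi
    intro i; fin_cases i <;> exact measurableSet_Icc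
  set S : Set (EuclideanSpace ℝ (Fin 2)) :=
    (MeasurableEquiv.toLp 2 (Fin 2 → ℝ)).symm ⁻¹' Ic with hS
  have hSmeas : MeasurableSet S :=
    (MeasurableEquiv.toLp 2 (Fin 2 → ℝ)).symm.measurable hIcmeas
  have hmemS : ∀ y : EuclideanSpace ℝ (Fin 2),
      y ∈ S ↔ (-δ ≤ y 0 ∧ y 0 ≤ L + δ) ∧ (-δ ≤ y 1 ∧ y 1 ≤ δ) := by
    intro y
    simp [hS, hIc, Set.mem_pi, Fin.forall_fin_two]
  have hsub : (⋃ z ∈ F, segment ℝ p₀ z) ⊆ (fun y => G (y - p₀)) ⁻¹' S := by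
    rintro y hy
    simp only [Set.mem_iUnion] at hy
    obtain ⟨z, hz, hyseg⟩ := hy
    obtain ⟨a, b, ha, hb, hab, rfl⟩ := hyseg
    have hb1 : b ≤ 1 := by linarith
    have hy' : a • p₀ + b • z - p₀ = b • (z - p₀) := by
      have haeq : a = 1 - b := by linarith
      subst haeq
      module
    have hzx : z - p₀ = (z - x₀) + q := by rw [hq]; abel
    obtain ⟨s0, hs0⟩ : ∃ r, (z - x₀) 0 = r := ⟨_, rfl⟩
    obtain ⟨s1, hs1⟩ : ∃ r, (z - x₀) 1 = r := ⟨_, rfl⟩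
    have hr0 : (z - p₀) 0 = L * v0 + s0 := by
      rw [hzx]; simp only [PiLp.add_apply]; rw [hq0, hs0]; ring
    have hr1 : (z - p₀) 1 = L * v1 + s1 := by
      rw [hzx]; simp only [PiLp.add_apply]; rw [hq1, hs1]; ring
    have hs_sq : s0 ^ 2 + s1 ^ 2 ≤ δ ^ 2 := by
      have h2 := aux_norm2 (z - x₀)
      rw [hs0, hs1] at h2
      have hd : ‖z - x₀‖ ≤ δ := by
        rw [← dist_eq_norm]; exact Metric.dist_le_diam_of_mem hFb hz hx₀
      nlinarith [norm_nonneg (z - x₀)]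
    have key : (v0 * s0 + v1 * s1) ^ 2 + (v0 * s1 - v1 * s0) ^ 2
        = (v0 ^ 2 + v1 ^ 2) * (s0 ^ 2 + s1 ^ 2) := by ring
    have key' : (-v1 * s0 + v0 * s1) ^ 2 + (v0 * s0 + v1 * s1) ^ 2
        = (v0 ^ 2 + v1 ^ 2) * (s0 ^ 2 + s1 ^ 2) := by ring
    rw [hunit, one_mul] at key key'
    obtain ⟨c, hc⟩ : ∃ r, v0 * s0 + v1 * s1 = r := ⟨_, rfl⟩
    obtain ⟨c', hc'⟩ : ∃ r, -v1 * s0 + v0 * s1 = r := ⟨_, rfl⟩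
    rw [hc] at key key'
    rw [hc'] at key'
    have hcsq : c ^ 2 ≤ δ ^ 2 := by nlinarith [sq_nonneg (v0 * s1 - v1 * s0)]
    have hcsq' : c' ^ 2 ≤ δ ^ 2 := by nlinarith [sq_nonneg c]
    have hcle : -δ ≤ c ∧ c ≤ δ :=
      ⟨by nlinarith [sq_nonneg (c + δ)], by nlinarith [sq_nonneg (c - δ)]⟩
    have hcle' : -δ ≤ c' ∧ c' ≤ δ :=
      ⟨by nlinarith [sq_nonneg (c' + δ)], by nlinarith [sq_nonneg (c' - δ)]⟩
    simp only [Set.mem_preimage]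
    rw [hmemS, hy']
    have hsm0 : (b • (z - p₀)) 0 = b * ((z - p₀) 0) := by
      simp [PiLp.smul_apply]
    have hsm1 : (b • (z - p₀)) 1 = b * ((z - p₀) 1) := by
      simp [PiLp.smul_apply]
    rw [hGeq, hT0, hT1, hsm0, hsm1, hr0, hr1]
    have e0 : v0 * (b * (L * v0 + s0)) + v1 * (b * (L * v1 + s1)) = b * (L + c) := by
      rw [← hc]; ring_nf; linear_combination (b * L) * hunit
    have e1 : -v1 * (b * (L * v0 + s0)) + v0 * (b * (L * v1 + s1)) = b * c' := by
      rw [← hc']; ring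
    rw [e0, e1]
    exact aux_arith δ L b c c' hδ0 hL0 hb hb1 hcle.1 hcle.2 hcle'.1 hcle'.2
  calc volume (⋃ z ∈ F, segment ℝ p₀ z)
      ≤ volume ((fun y => G (y - p₀)) ⁻¹' S) := measure_mono hsub
    _ = volume (G ⁻¹' S) := by
        have heq : (fun y : EuclideanSpace ℝ (Fin 2) => G (y - p₀)) ⁻¹' S
            = (fun y : EuclideanSpace ℝ (Fin 2) => y + (-p₀)) ⁻¹' (G ⁻¹' S) := by
          ext y; simp [sub_eq_add_neg]
        rw [heq, measure_preimage_add_right]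
    _ = volume S := hGmp.measure_preimage hSmeas.nullMeasurableSet
    _ = ENNReal.ofReal (L + 2 * δ) * ENNReal.ofReal (2 * δ) := by
        rw [hS, (EuclideanSpace.volume_preserving_symm_measurableEquiv_toLp (Fin 2)).measure_preimage
          hIcmeas.nullMeasurableSet, hIc, volume_pi_pi, Fin.prod_univ_two]
        simp only [Matrix.cons_val_zero, Matrix.cons_val_one, Matrix.head_cons, Real.volume_Icc]
        congr 1 <;> congr 1 <;> ring
    _ ≤ ENNReal.ofReal (6 * D) * EMetric.diam F := by
        have hdiam : EMetric.diam F = ENNReal.ofReal δ :=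
          (ENNReal.ofReal_toReal hFb.ediam_ne_top).symm
        rw [hdiam, ← ENNReal.ofReal_mul (by positivity), ← ENNReal.ofReal_mul (by positivity)]
        exact ENNReal.ofReal_le_ofReal (by nlinarith)



theorem stmt1
    (P : Set (EuclideanSpace ℝ (Fin 2)))
    (S : Finset (EuclideanSpace ℝ (Fin 2)))
    (hP : P = interior (convexHull ℝ (S : Set (EuclideanSpace ℝ (Fin 2)))))
    (hPne : P.Nonempty) (hPbdd : Bornology.IsBounded P)
    (α β : EuclideanSpace ℝ (Fin 2) → ℝ)
    (hαmeas : Measurable α) (hβmeas : Measurable β)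
    (cα Cα : ℝ) (hcα : 0 < cα)
    (hα : ∀ x ∈ closure P, cα ≤ α x ∧ α x ≤ Cα)
    (cβ Cβ : ℝ) (hcβ : 0 < cβ)
    (hβ : ∀ x ∈ closure P, cβ ≤ β x ∧ β x ≤ Cβ)
    (A : EuclideanSpace ℝ (Fin 2) →ᵃ[ℝ] ℝ)
    (L : (EuclideanSpace ℝ (Fin 2) → ℝ) → ℝ)
    (hL : ∀ u, L u = (∫ x in frontier P, α x * u x ∂(μH[1]))
        - ∫ x in P, A x * β x * u x)
    (hLaff : ∀ f : EuclideanSpace ℝ (Fin 2) →ᵃ[ℝ] ℝ, L (fun x => f x) = 0)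
    (p₀ : EuclideanSpace ℝ (Fin 2)) (hp₀ : p₀ ∈ P) :
    ∃ B : ℝ, ∀ u : EuclideanSpace ℝ (Fin 2) → ℝ,
      ConvexOn ℝ (closure P) u →
      (∫ x in frontier P, α x * u x ∂(μH[1])) = 1 →
      (∀ x ∈ P, 0 ≤ u x) → u p₀ = 0 →
      B ≤ L u := by
  classical
  have hPopen : IsOpen P := hP ▸ isOpen_interior
  have hPconv : Convex ℝ P := hP ▸ (convex_convexHull ℝ _).interior
  have hPclb : IsBounded (closure P) := hPbdd.closure
  set D := Metric.diam (closure P) with hD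
  have hcomp : IsCompact (closure P) := hPbdd.isCompact_closure
  have hAcont : Continuous A := A.continuous_of_finiteDimensional
  obtain ⟨MA', hMA'⟩ : ∃ M, ∀ x ∈ closure P, ‖A x‖ ≤ M :=
    hcomp.exists_bound_of_continuousOn hAcont.continuousOn
  set MA := max MA' 0 with hMA
  have hMA0 : 0 ≤ MA := le_max_right _ _
  have hMAb : ∀ x ∈ closure P, |A x| ≤ MA := by
    intro x hx
    have h := hMA' x hx
    rw [Real.norm_eq_abs] at h
    exact h.trans (le_max_left _ _)
  have hCβ0 : 0 < Cβ := by
    obtain ⟨x, hx⟩ := hPne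
    have := hβ x (subset_closure hx)
    linarith
  set c : ℝ≥0∞ := ENNReal.ofReal (6 * D) + 1 with hc
  have hc0 : c ≠ 0 := by simp [hc]
  have hctop : c ≠ ⊤ := by simp [hc, ENNReal.mul_eq_top]
  have hcαtop : (ENNReal.ofReal cα)⁻¹ ≠ ⊤ := by
    simp [ENNReal.inv_ne_top, ENNReal.ofReal_pos.2 hcα, (ENNReal.ofReal_pos.2 hcα).ne']
  set KK : ℝ≥0∞ := c * (ENNReal.ofReal cα)⁻¹ with hKK
  have hKKtop : KK ≠ ⊤ := ENNReal.mul_ne_top hctop hcαtop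
  set Kfin : ℝ≥0∞ := ENNReal.ofReal (MA * Cβ) * KK with hKfin
  have hKfintop : Kfin ≠ ⊤ := ENNReal.mul_ne_top ENNReal.ofReal_ne_top hKKtop
  set K : ℝ := Kfin.toReal with hK
  have hpint : p₀ ∈ interior P := by rw [hPopen.interior_eq]; exact hp₀
  refine ⟨1 - K, fun u hu h1 hu0 hup₀ => ?_⟩
  rw [hL, h1]
  suffices hmain : ∫ x in P, A x * β x * u x ≤ K by linarith
  -- u is nonnegative on the closure
  have hu0' : ∀ z ∈ closure P, 0 ≤ u z := by
    intro z hz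
    have hmid : (1 / 2 : ℝ) • p₀ + (1 / 2 : ℝ) • z ∈ P := by
      have := hPconv.combo_interior_closure_mem_interior (x := p₀) (y := z)
        (a := 1/2) (b := 1/2) hpint hz (by norm_num) (by norm_num) (by norm_num)
      rwa [hPopen.interior_eq] at this
    have hcomb := hu.2 (subset_closure hp₀) hz
      (by norm_num : (0:ℝ) ≤ 1/2) (by norm_num : (0:ℝ) ≤ 1/2) (by norm_num)
    have h0 := hu0 _ hmid
    rw [hup₀] at hcomb
    simp only [smul_eq_mul] at hcomb
    linarith
  -- gauge setup
  set Q : Set (EuclideanSpace ℝ (Fin 2)) := (fun y => p₀ + y) ⁻¹' P with hQ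
  have hQconv : Convex ℝ Q := hPconv.translate_preimage_right p₀
  have hQopen : IsOpen Q := hPopen.preimage (continuous_const.add continuous_id)
  have hQ0 : (0 : EuclideanSpace ℝ (Fin 2)) ∈ Q := by simp [hQ, hp₀]
  have hQnhds : Q ∈ nhds (0 : EuclideanSpace ℝ (Fin 2)) := hQopen.mem_nhds hQ0
  have habs : Absorbent ℝ Q := absorbent_nhds_zero hQnhds
  have hQbdd : IsBounded Q := by
    obtain ⟨r, hr⟩ := hPbdd.subset_closedBall p₀
    refine (Metric.isBounded_closedBall (x := (0 : EuclideanSpace ℝ (Fin 2))) (r := r)).subset ?_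
    intro y hy
    have := hr hy
    simp only [Metric.mem_closedBall] at this ⊢
    rw [dist_eq_norm] at this ⊢
    simpa using this
  have hvnb : Bornology.IsVonNBounded ℝ Q := NormedSpace.isVonNBounded_of_isBounded _ hQbdd
  set g : EuclideanSpace ℝ (Fin 2) → ℝ := fun x => gauge Q (x - p₀) with hg
  have hgcont : Continuous g :=
    (continuous_gauge hQconv hQnhds).comp (continuous_id.sub continuous_const)
  set R : EuclideanSpace ℝ (Fin 2) → EuclideanSpace ℝ (Fin 2) :=
    fun x => p₀ + (g x)⁻¹ • (x - p₀) with hR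
  set P' : Set (EuclideanSpace ℝ (Fin 2)) := P \ {p₀} with hP'
  have hP'meas : MeasurableSet P' := hPopen.measurableSet.diff (measurableSet_singleton p₀)
  have hgx1 : ∀ x ∈ P, g x < 1 := by
    intro x hx
    apply gauge_lt_one_of_mem_of_isOpen hQopen
    simp only [hQ, Set.mem_preimage, add_sub_cancel]
    exact hx
  have hgx0 : ∀ x ∈ P', 0 < g x := by
    rintro x ⟨hx, hxne⟩
    exact (gauge_pos habs hvnb).2 (sub_ne_zero.2 hxne)
  have hRgauge : ∀ x ∈ P', gauge Q (R x - p₀) = 1 := by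
    intro x hx
    have h0 := hgx0 x hx
    simp only [hR, add_sub_cancel_left]
    rw [gauge_smul_of_nonneg (inv_nonneg.2 h0.le), smul_eq_mul, inv_mul_cancel₀ h0.ne']
  have hclQ : closure Q = (fun y => p₀ + y) ⁻¹' closure P := by
    have := (Homeomorph.addLeft p₀).preimage_closure P
    simp only [Homeomorph.coe_addLeft] at this
    rw [hQ, ← this]
  have hRcl : ∀ x ∈ P', R x ∈ closure P := by
    intro x hx
    have h1 : R x - p₀ ∈ closure Q :=
      (gauge_le_one_iff_mem_closure hQconv hQnhds).1 (hRgauge x hx).le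
    rw [hclQ] at h1
    simpa [add_sub_cancel] using h1
  have hRfr : ∀ x ∈ P', R x ∈ frontier P := by
    intro x hx
    rw [hPopen.frontier_eq]
    refine ⟨hRcl x hx, fun hmem => ?_⟩
    have := hgx1 _ hmem
    have h2 : g (R x) = gauge Q (R x - p₀) := rfl
    rw [h2, hRgauge x hx] at this
    exact lt_irrefl _ this
  have hseg : ∀ x ∈ P', x = (1 - g x) • p₀ + g x • R x := by
    intro x hx
    have h0 := hgx0 x hx
    rw [hR]
    rw [smul_add, smul_smul, mul_inv_cancel₀ h0.ne', one_smul, sub_smul, one_smul]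
    abel
  have hsegmem : ∀ x ∈ P', x ∈ segment ℝ p₀ (R x) := by
    intro x hx
    exact ⟨1 - g x, g x, by linarith [hgx1 x hx.1], (hgx0 x hx).le, by ring, (hseg x hx).symm⟩
  have hRcont : ContinuousOn R P' := by
    apply continuousOn_const.add
    exact ((hgcont.continuousOn.inv₀ fun x hx => (hgx0 x hx).ne').smul
      (continuous_id.sub continuous_const).continuousOn)
  have hRae : AEMeasurable R (volume.restrict P') := hRcont.aemeasurable hP'meas
  set ν : Measure (EuclideanSpace ℝ (Fin 2)) := Measure.map R (volume.restrict P') with hν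
  -- continuity of u inside P
  have hucont : ContinuousOn u P :=
    (hu.continuousOn_interior).mono (interior_maximal subset_closure hPopen)
  -- the approximating sequence
  set sn : ℕ → ℝ := fun n => 1 - 1 / (n + 2) with hsn
  have hsn0 : ∀ n, 0 < sn n := by
    intro n
    have h2 : (0:ℝ) < (n:ℝ) + 2 := by positivity
    have h3 : 1 / ((n:ℝ) + 2) < 1 := by
      rw [div_lt_one h2]; linarith [Nat.cast_nonneg (α := ℝ) n]
    simp only [hsn]; linarith
  have hsn1 : ∀ n, sn n < 1 := by
    intro n
    have h2 : (0:ℝ) < (n:ℝ) + 2 := by positivity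
    simp only [hsn]
    have : 0 < 1 / ((n:ℝ) + 2) := by positivity
    linarith
  have hcmapP : ∀ n, ∀ z ∈ closure P, (1 - sn n) • p₀ + sn n • z ∈ P := by
    intro n z hz
    have := hPconv.combo_interior_closure_mem_interior (x := p₀) (y := z)
      (a := 1 - sn n) (b := sn n) hpint hz (by linarith [hsn1 n]) (hsn0 n).le (by ring)
    rwa [hPopen.interior_eq] at this
  set G : ℕ → EuclideanSpace ℝ (Fin 2) → ℝ≥0∞ := fun n =>
    (closure P).indicator fun z => ENNReal.ofReal (u ((1 - sn n) • p₀ + sn n • z)) with hGdef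
  have hGmeas : ∀ n, Measurable (G n) := by
    intro n
    apply aux_meas_indicator isClosed_closure.measurableSet
    apply ENNReal.continuous_ofReal.comp_continuousOn
    apply hucont.comp
    · exact (continuous_const.add (continuous_id.const_smul (sn n))).continuousOn
    · intro z hz
      exact hcmapP n z hz
  set U : EuclideanSpace ℝ (Fin 2) → ℝ≥0∞ := fun z => ⨆ n, G n z with hU
  have hUmeas : Measurable U := Measurable.iSup hGmeas
  -- pointwise bound inside P
  have key1 : ∀ x ∈ P', ENNReal.ofReal (u x) ≤ U (R x) := by
    intro x hx
    have hzcl : R x ∈ closure P := hRcl x hx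
    have hgpos := hgx0 x hx
    have hglt := hgx1 x hx.1
    obtain ⟨n, hn⟩ : ∃ n : ℕ, g x ≤ sn n := by
      obtain ⟨n, hn⟩ := exists_nat_one_div_lt (show (0:ℝ) < 1 - g x by linarith)
      refine ⟨n, ?_⟩
      have h2 : (0:ℝ) < (n:ℝ) + 1 := by positivity
      have h3 : (0:ℝ) < (n:ℝ) + 2 := by positivity
      have h4 : 1 / ((n:ℝ) + 2) ≤ 1 / ((n:ℝ) + 1) :=
        one_div_le_one_div_of_le h2 (by linarith)
      simp only [hsn]
      push_cast at hn ⊢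
      linarith
    set y := (1 - sn n) • p₀ + sn n • R x with hy
    have hyP : y ∈ P := hcmapP n _ hzcl
    have huy0 : 0 ≤ u y := hu0 _ hyP
    have hsnne : sn n ≠ 0 := (hsn0 n).ne'
    have hfrac : g x / sn n * sn n = g x := div_mul_cancel₀ _ hsnne
    have hfrac2 : g x / sn n * (1 - sn n) = g x / sn n - g x := by
      rw [mul_sub, mul_one, hfrac]
    have hxy : x = (1 - g x / sn n) • p₀ + (g x / sn n) • y := by
      have hrhs : (1 - g x / sn n) • p₀ + (g x / sn n) • ((1 - sn n) • p₀ + sn n • R x)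
          = (1 - g x) • p₀ + g x • R x := by
        rw [smul_add, smul_smul, smul_smul, hfrac, hfrac2]
        module
      rw [hy, hrhs]
      exact hseg x hx
    have hb01 : g x / sn n ≤ 1 := by
      rw [div_le_one (hsn0 n)]; exact hn
    have hb00 : 0 ≤ g x / sn n := div_nonneg hgpos.le (hsn0 n).le
    have hcomb := hu.2 (subset_closure hp₀) (subset_closure hyP)
      (by linarith : (0:ℝ) ≤ 1 - g x / sn n) hb00 (by ring)
    rw [← hxy, hup₀] at hcomb
    have hux : u x ≤ u y := by
      simp only [smul_eq_mul] at hcomb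
      nlinarith [huy0]
    calc ENNReal.ofReal (u x) ≤ ENNReal.ofReal (u y) := ENNReal.ofReal_le_ofReal hux
      _ = G n (R x) := by
          simp only [hGdef]
          rw [Set.indicator_of_mem hzcl]
      _ ≤ U (R x) := le_iSup (fun m => G m (R x)) n
  -- pointwise bound on the frontier
  have key2 : ∀ z ∈ frontier P, U z ≤ ENNReal.ofReal (u z) := by
    intro z hz
    have hzcl : z ∈ closure P := frontier_subset_closure hz
    refine iSup_le fun n => ?_
    simp only [hGdef]
    rw [Set.indicator_of_mem hzcl]
    apply ENNReal.ofReal_le_ofReal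
    have hcomb := hu.2 (subset_closure hp₀) hzcl (by linarith [hsn1 n] : (0:ℝ) ≤ 1 - sn n)
      (hsn0 n).le (by ring)
    rw [hup₀] at hcomb
    simp only [smul_eq_mul] at hcomb
    nlinarith [hu0' z hzcl, hsn1 n, hsn0 n]
  -- the boundary integral as a lower integral
  have hfrmeas : MeasurableSet (frontier P) := isClosed_frontier.measurableSet
  have hInt : Integrable (fun z => α z * u z) (μH[1].restrict (frontier P)) := by
    by_contra hni
    rw [integral_undef hni] at h1
    exact one_ne_zero h1.symm
  have hlint1 : ∫⁻ z in frontier P, ENNReal.ofReal (α z * u z) ∂μH[1] = 1 := by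
    rw [← ofReal_integral_eq_lintegral_ofReal hInt]
    · rw [h1, ENNReal.ofReal_one]
    · exact ae_restrict_of_forall_mem hfrmeas fun z hz =>
        mul_nonneg (hcα.le.trans (hα z (frontier_subset_closure hz)).1)
          (hu0' z (frontier_subset_closure hz))
  have hfr_u : ∫⁻ z in frontier P, ENNReal.ofReal (u z) ∂μH[1] ≤ (ENNReal.ofReal cα)⁻¹ := by
    rw [ENNReal.le_inv_iff_mul_le]
    calc (∫⁻ z in frontier P, ENNReal.ofReal (u z) ∂μH[1]) * ENNReal.ofReal cα
        = ∫⁻ z in frontier P, ENNReal.ofReal cα * ENNReal.ofReal (u z) ∂μH[1] := by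
          rw [lintegral_const_mul' _ _ ENNReal.ofReal_ne_top, mul_comm]
      _ ≤ ∫⁻ z in frontier P, ENNReal.ofReal (α z * u z) ∂μH[1] := by
          apply lintegral_mono_ae
          refine ae_restrict_of_forall_mem hfrmeas fun z hz => ?_
          rw [← ENNReal.ofReal_mul hcα.le]
          exact ENNReal.ofReal_le_ofReal
            (mul_le_mul_of_nonneg_right (hα z (frontier_subset_closure hz)).1
              (hu0' z (frontier_subset_closure hz)))
      _ = 1 := hlint1
  -- the cone bound for the mapped measure
  have hconeb : ∀ s : Set (EuclideanSpace ℝ (Fin 2)), ν s ≤ c * EMetric.diam s := by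
    intro s
    calc ν s ≤ ν (closure s) := measure_mono subset_closure
      _ = (volume.restrict P') (R ⁻¹' closure s) :=
          Measure.map_apply_of_aemeasurable hRae isClosed_closure.measurableSet
      _ = volume (R ⁻¹' closure s ∩ P') := Measure.restrict_apply' hP'meas
      _ ≤ volume (⋃ z ∈ closure s ∩ frontier P, segment ℝ p₀ z) := by
          apply measure_mono
          rintro x ⟨hx1, hx2⟩
          exact Set.mem_biUnion ⟨hx1, hRfr x hx2⟩ (hsegmem x hx2)
      _ ≤ ENNReal.ofReal (6 * D) * EMetric.diam (closure s ∩ frontier P) :=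
          aux_cone p₀ (closure P) hPclb (subset_closure hp₀) _
            (fun z hz => (frontier_subset_closure hz.2))
      _ ≤ ENNReal.ofReal (6 * D) * EMetric.diam s := by
          apply mul_le_mul_right
          calc EMetric.diam (closure s ∩ frontier P) ≤ EMetric.diam (closure s) :=
                EMetric.diam_mono Set.inter_subset_left
            _ = EMetric.diam s := EMetric.diam_closure _
      _ ≤ c * EMetric.diam s := by
          apply mul_le_mul_left
          rw [hc]
          exact le_self_add
  have hν_le : ν ≤ c • μH[1] := by
    have hle : (c⁻¹ • ν) ≤ μH[1] := by
      apply MeasureTheory.Measure.le_hausdorffMeasure 1 _ 1 one_pos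
      intro s _
      rw [ENNReal.rpow_one]
      calc (c⁻¹ • ν) s = c⁻¹ * ν s := by rw [Measure.smul_apply, smul_eq_mul]
        _ ≤ c⁻¹ * (c * EMetric.diam s) := mul_le_mul_right (hconeb s) _
        _ = EMetric.diam s := by
            rw [← mul_assoc, ENNReal.inv_mul_cancel hc0 hctop, one_mul]
    rw [Measure.le_iff]
    intro s hs
    have h2 := Measure.le_iff.1 hle s hs
    rw [Measure.smul_apply, smul_eq_mul] at h2 ⊢
    calc ν s = c * (c⁻¹ * ν s) := by
          rw [← mul_assoc, ENNReal.mul_inv_cancel hc0 hctop, one_mul]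
      _ ≤ c * μH[1] s := mul_le_mul_right h2 _
  have hν_fr : ν.restrict (frontier P) = ν := by
    apply Measure.restrict_eq_self_of_ae_mem
    have hcompl : ν (frontier P)ᶜ = 0 := by
      rw [hν, Measure.map_apply_of_aemeasurable hRae hfrmeas.compl,
        Measure.restrict_apply' hP'meas]
      have : R ⁻¹' (frontier P)ᶜ ∩ P' = ∅ := by
        ext x
        simp only [Set.mem_inter_iff, Set.mem_preimage, Set.mem_compl_iff, Set.mem_empty_iff_false,
          iff_false, not_and]
        intro hx1 hx2
        exact hx1 (hRfr x hx2)
      rw [this, measure_empty]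
    exact mem_ae_iff.2 hcompl
  -- the main area estimate
  have harea : ∫⁻ x in P, ENNReal.ofReal (u x) ≤ KK := by
    have hsing : volume ({p₀} : Set (EuclideanSpace ℝ (Fin 2))) = 0 := measure_singleton p₀
    have hres : volume.restrict P = volume.restrict P' := by
      rw [hP']
      exact (Measure.restrict_congr_set (MeasureTheory.diff_ae_eq_self.2
        (measure_mono_null Set.inter_subset_right hsing))).symm
    calc ∫⁻ x in P, ENNReal.ofReal (u x) = ∫⁻ x in P', ENNReal.ofReal (u x) := by rw [hres]
      _ ≤ ∫⁻ x in P', U (R x) := by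
          apply lintegral_mono_ae
          exact ae_restrict_of_forall_mem hP'meas key1
      _ = ∫⁻ z, U z ∂ν := (lintegral_map' hUmeas.aemeasurable hRae).symm
      _ = ∫⁻ z in frontier P, U z ∂ν := by rw [hν_fr]
      _ ≤ ∫⁻ z in frontier P, U z ∂(c • μH[1]) :=
          lintegral_mono' (Measure.restrict_mono (subset_refl _) hν_le) (le_refl _)
      _ = c * ∫⁻ z in frontier P, U z ∂μH[1] := by
          rw [Measure.restrict_smul, lintegral_smul_measure, smul_eq_mul]
      _ ≤ c * ∫⁻ z in frontier P, ENNReal.ofReal (u z) ∂μH[1] := by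
          apply mul_le_mul_right
          exact lintegral_mono_ae (ae_restrict_of_forall_mem hfrmeas key2)
      _ ≤ c * (ENNReal.ofReal cα)⁻¹ := mul_le_mul_right hfr_u _
      _ = KK := hKK.symm
  -- conclude via the Bochner integral
  by_cases hi : Integrable (fun x => A x * β x * u x) (volume.restrict P)
  · have hnorm : ∫ x in P, ‖A x * β x * u x‖
        = (∫⁻ x in P, ENNReal.ofReal ‖A x * β x * u x‖).toReal :=
      integral_eq_lintegral_of_nonneg_ae (Filter.Eventually.of_forall fun x => norm_nonneg _)
        hi.aestronglyMeasurable.norm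
    have hbound : ∫⁻ x in P, ENNReal.ofReal ‖A x * β x * u x‖ ≤ Kfin := by
      calc ∫⁻ x in P, ENNReal.ofReal ‖A x * β x * u x‖
          ≤ ∫⁻ x in P, ENNReal.ofReal (MA * Cβ) * ENNReal.ofReal (u x) := by
            apply lintegral_mono_ae
            refine ae_restrict_of_forall_mem hPopen.measurableSet fun x hx => ?_
            rw [← ENNReal.ofReal_mul (by positivity)]
            apply ENNReal.ofReal_le_ofReal
            have hxcl := subset_closure hx
            have h1 : ‖A x * β x * u x‖ = |A x| * |β x| * |u x| := by
              rw [Real.norm_eq_abs, abs_mul, abs_mul]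
            rw [h1, abs_of_nonneg (le_trans hcβ.le (hβ x hxcl).1),
              abs_of_nonneg (hu0 x hx)]
            have hb1 : |A x| * β x ≤ MA * Cβ := by
              apply mul_le_mul (hMAb x hxcl) (hβ x hxcl).2
                (le_trans hcβ.le (hβ x hxcl).1) hMA0
            exact mul_le_mul_of_nonneg_right hb1 (hu0 x hx)
        _ = ENNReal.ofReal (MA * Cβ) * ∫⁻ x in P, ENNReal.ofReal (u x) :=
            lintegral_const_mul' _ _ ENNReal.ofReal_ne_top
        _ ≤ ENNReal.ofReal (MA * Cβ) * KK := mul_le_mul_right harea _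
        _ = Kfin := hKfin.symm
    calc ∫ x in P, A x * β x * u x ≤ |∫ x in P, A x * β x * u x| := le_abs_self _
      _ ≤ ∫ x in P, ‖A x * β x * u x‖ := by
          rw [← Real.norm_eq_abs]
          exact norm_integral_le_integral_norm _
      _ = (∫⁻ x in P, ENNReal.ofReal ‖A x * β x * u x‖).toReal := hnorm
      _ ≤ K := by
          rw [hK]
          exact ENNReal.toReal_mono hKfintop hbound
  · rw [integral_undef hi]
    rw [hK]
    exact ENNReal.toReal_nonneg
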